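/- Let φ : [0,L] → ℝ (L ≥ 1) be a C² function, positive and decreasing on [0,L), with φ(L)=0, satisfying φ'' = χφ where χ is continuous, strictly positive on (0,L), χ(0)=0, and χ is uniformly close to the identity function on [0,1] (say |χ(x) - x| ≤ 1/10 on [0,1]). Then 1/800 < -φ'(0)/φ(0) < 2. -/

import Mathlib

/- STATEMENT 12: Let φ : [0,L] → ℝ (L ≥ 1) be C², positive and decreasing on [0,L),
with φ(L)=0, satisfying φ'' = χφ where χ is continuous, strictly positive on (0,L),
χ(0)=0, and |χ(x) - x| ≤ 1/10 on [0,1]. Then 1/800 < -φ'(0)/φ(0) < 2. -/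

theorem airy_type_log_derivative_bound
    (L : ℝ) (hL : 1 ≤ L) (φ χ : ℝ → ℝ)
    (hφ : ContDiff ℝ 2 φ)
    (hpos : ∀ x ∈ Set.Ico (0 : ℝ) L, 0 < φ x)
    (hanti : AntitoneOn φ (Set.Ico 0 L))
    (hL0 : φ L = 0)
    (hode : ∀ x ∈ Set.Icc (0 : ℝ) L, deriv (deriv φ) x = χ x * φ x)
    (hχ : ContinuousOn χ (Set.Icc 0 L))
    (hχpos : ∀ x ∈ Set.Ioo (0 : ℝ) L, 0 < χ x)
    (hχ0 : χ 0 = 0)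
    (hχid : ∀ x ∈ Set.Icc (0 : ℝ) 1, |χ x - x| ≤ 1 / 10) :
    1 / 800 < -(deriv φ 0) / φ 0 ∧ -(deriv φ 0) / φ 0 < 2 := by
  have h0L : (0:ℝ) < L := by linarith
  have hφ0 : 0 < φ 0 := hpos 0 ⟨le_refl 0, h0L⟩
  have hd1 : Differentiable ℝ φ := hφ.differentiable (by norm_num)
  have hd2 : Differentiable ℝ (deriv φ) := by
    have h := contDiff_succ_iff_deriv.mp (show ContDiff ℝ (1+1) φ by exact_mod_cast hφ)
    exact h.2.2.differentiable (by norm_num)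
  -- φ nonneg on [0, L]
  have hφnn : ∀ x ∈ Set.Icc (0:ℝ) L, 0 ≤ φ x := by
    intro x hx
    rcases lt_or_eq_of_le hx.2 with h | h
    · exact (hpos x ⟨hx.1, h⟩).le
    · rw [h, hL0]
  -- φ ≤ φ 0 on [0, L]
  have hφle : ∀ x ∈ Set.Icc (0:ℝ) L, φ x ≤ φ 0 := by
    intro x hx
    rcases lt_or_eq_of_le hx.2 with h | h
    · exact hanti ⟨le_refl 0, h0L⟩ ⟨hx.1, h⟩ hx.1
    · rw [h, hL0]; exact hφ0.le
  -- χ·φ nonneg on [0,L]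
  have hχφnn : ∀ x ∈ Set.Icc (0:ℝ) L, 0 ≤ χ x * φ x := by
    intro x hx
    rcases eq_or_lt_of_le hx.1 with h0 | h0
    · rw [← h0, hχ0, zero_mul]
    rcases lt_or_eq_of_le hx.2 with hL' | hL'
    · exact (mul_pos (hχpos x ⟨h0, hL'⟩) (hpos x ⟨hx.1, hL'⟩)).le
    · rw [hL', hL0, mul_zero]
  -- φ' is monotone on [0,L]
  have hmono : MonotoneOn (deriv φ) (Set.Icc 0 L) := by
    apply monotoneOn_of_deriv_nonneg (convex_Icc 0 L) hd2.continuous.continuousOn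
      (hd2.differentiableOn.mono interior_subset)
    intro x hx
    rw [interior_Icc] at hx
    rw [hode x (Set.Ioo_subset_Icc_self hx)]
    exact hχφnn x (Set.Ioo_subset_Icc_self hx)
  -- φ' < 0 on [0, L)
  have hA : ∀ x ∈ Set.Ico (0:ℝ) L, deriv φ x < 0 := by
    intro x hx
    obtain ⟨c, hc, hceq⟩ := exists_deriv_eq_slope φ hx.2 hd1.continuous.continuousOn
      hd1.differentiableOn
    have hslope : deriv φ c < 0 := by
      rw [hceq, hL0]
      apply div_neg_of_neg_of_pos
      · linarith [hpos x hx]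
      · linarith [hx.2]
    calc deriv φ x ≤ deriv φ c :=
          hmono ⟨hx.1, hx.2.le⟩ ⟨hx.1.trans hc.1.le, hc.2.le⟩ hc.1.le
      _ < 0 := hslope
  have h1L : Set.Icc (0:ℝ) 1 ⊆ Set.Icc 0 L := Set.Icc_subset_Icc_right hL
  -- tangent line bound (convexity): φ 0 + φ'(0) x ≤ φ x on [0,1]
  have hB : ∀ x ∈ Set.Icc (0:ℝ) 1, φ 0 + deriv φ 0 * x ≤ φ x := by
    have hh : ∀ x : ℝ, HasDerivAt (fun y => φ y - deriv φ 0 * y)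
        (deriv φ x - deriv φ 0) x := by
      intro x
      have := (hd1 x).hasDerivAt.sub ((hasDerivAt_id x).const_mul (deriv φ 0))
      exact this.congr_deriv (by simp)
    have hm : MonotoneOn (fun y => φ y - deriv φ 0 * y) (Set.Icc 0 1) := by
      have hhdiff : Differentiable ℝ (fun y => φ y - deriv φ 0 * y) :=
        fun x => (hh x).differentiableAt
      apply monotoneOn_of_deriv_nonneg (convex_Icc 0 1) hhdiff.continuous.continuousOn
        hhdiff.differentiableOn
      intro x hx
      rw [interior_Icc] at hx
      rw [(hh x).deriv]
      have := hmono (Set.mem_Icc.mpr ⟨le_refl 0, h0L.le⟩)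
        (h1L ⟨hx.1.le, hx.2.le⟩) hx.1.le
      linarith
    intro x hx
    have := hm ⟨le_refl 0, zero_le_one⟩ hx hx.1
    simp only [mul_zero, sub_zero] at this
    linarith [this]
  -- bounds on χ on [0,1]
  have hχub : ∀ x ∈ Set.Icc (0:ℝ) 1, χ x ≤ x + 1/10 := by
    intro x hx; have := abs_le.mp (hχid x hx); linarith [this.2]
  have hχlb : ∀ x ∈ Set.Icc (0:ℝ) 1, x - 1/10 ≤ χ x := by
    intro x hx; have := abs_le.mp (hχid x hx); linarith [this.1]
  -- Upper bound: Taylor-type estimate, φ 1 ≤ φ 0 + φ'(0) + (11/20) φ 0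
  have hup : -(deriv φ 0) ≤ (31/20) * φ 0 := by
    set c : ℝ := deriv φ 0 with hc
    have hg'd : ∀ x : ℝ, HasDerivAt (fun y => c + 11/10 * φ 0 * y - deriv φ y)
        (11/10 * φ 0 - deriv (deriv φ) x) x := by
      intro x
      have h1 : HasDerivAt (fun y : ℝ => c + 11/10 * φ 0 * y) (11/10 * φ 0) x := by
        exact ((hasDerivAt_const x c).add ((hasDerivAt_id x).const_mul (11/10 * φ 0))).congr_deriv (by simp)
      exact h1.sub (hd2 x).hasDerivAt
    have hg'diff : Differentiable ℝ (fun y => c + 11/10 * φ 0 * y - deriv φ y) :=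
      fun x => (hg'd x).differentiableAt
    have hg'mono : MonotoneOn (fun y => c + 11/10 * φ 0 * y - deriv φ y) (Set.Icc 0 1) := by
      apply monotoneOn_of_deriv_nonneg (convex_Icc 0 1) hg'diff.continuous.continuousOn
        hg'diff.differentiableOn
      intro x hx
      rw [interior_Icc] at hx
      rw [(hg'd x).deriv, hode x (h1L ⟨hx.1.le, hx.2.le⟩)]
      have hx1 : x ∈ Set.Icc (0:ℝ) 1 := ⟨hx.1.le, hx.2.le⟩
      have h1 : χ x * φ x ≤ 11/10 * φ 0 := by
        have hub := hχub x hx1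
        apply mul_le_mul (by linarith [hx.2]) (hφle x (h1L hx1)) (hφnn x (h1L hx1))
          (by norm_num)
      linarith
    -- so the integrand of g is nonneg on [0,1]: g' x ≥ g' 0 = 0
    have hg'nn : ∀ x ∈ Set.Icc (0:ℝ) 1, 0 ≤ c + 11/10 * φ 0 * x - deriv φ x := by
      intro x hx
      have := hg'mono ⟨le_refl 0, zero_le_one⟩ hx hx.1
      simp only [mul_zero, add_zero] at this
      linarith [this]
    -- g monotone on [0,1]
    have hgd : ∀ x : ℝ, HasDerivAt (fun y => φ 0 + c * y + 11/20 * φ 0 * y^2 - φ y)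
        (c + 11/10 * φ 0 * x - deriv φ x) x := by
      intro x
      have h1 : HasDerivAt (fun y : ℝ => φ 0 + c * y + 11/20 * φ 0 * y^2)
          (c + 11/10 * φ 0 * x) x := by
        have ha : HasDerivAt (fun y : ℝ => φ 0 + c * y) c x := by
          exact ((hasDerivAt_const x (φ 0)).add ((hasDerivAt_id x).const_mul c)).congr_deriv (by simp)
        have hb : HasDerivAt (fun y : ℝ => 11/20 * φ 0 * y^2)
            (11/20 * φ 0 * (2 * x)) x := by
          have := ((hasDerivAt_pow 2 x)).const_mul (11/20 * φ 0)
          simpa [mul_comm, mul_assoc, mul_left_comm] using this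
        have := ha.add hb
        exact this.congr_deriv (by ring)
      exact h1.sub (hd1 x).hasDerivAt
    have hgdiff : Differentiable ℝ (fun y => φ 0 + c * y + 11/20 * φ 0 * y^2 - φ y) :=
      fun x => (hgd x).differentiableAt
    have hgmono : MonotoneOn (fun y => φ 0 + c * y + 11/20 * φ 0 * y^2 - φ y)
        (Set.Icc 0 1) := by
      apply monotoneOn_of_deriv_nonneg (convex_Icc 0 1) hgdiff.continuous.continuousOn
        hgdiff.differentiableOn
      intro x hx
      rw [interior_Icc] at hx
      rw [(hgd x).deriv]
      exact hg'nn x ⟨hx.1.le, hx.2.le⟩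
    have h01 := hgmono ⟨le_refl 0, zero_le_one⟩ ⟨zero_le_one, le_refl 1⟩ zero_le_one
    simp only [mul_zero, mul_one, add_zero, one_pow] at h01
    have hφ1 : 0 ≤ φ 1 := hφnn 1 ⟨zero_le_one, hL⟩
    -- h01 : φ 0 + 0 + 0 - φ 0 ≤ φ 0 + c + 11/20 φ 0 - φ 1
    nlinarith [h01, hφ1]
  -- Lower bound
  have hlow : 1/800 * φ 0 < -(deriv φ 0) := by
    by_contra hcon
    push_neg at hcon
    set c : ℝ := deriv φ 0 with hcdef
    -- then φ x ≥ (799/800) φ 0 on [0,1]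
    have hφlb : ∀ x ∈ Set.Icc (0:ℝ) 1, 799/800 * φ 0 ≤ φ x := by
      intro x hx
      have h1 := hB x hx
      have h2 : c * x ≥ -(1/800 * φ 0) * x := by
        apply mul_le_mul_of_nonneg_right _ hx.1
        linarith
      nlinarith [hx.1, hx.2, hφ0]
    -- k(x) = φ'(x) - (799/1600) φ0 (x-1/10)² is monotone on [1/10, 9/10]
    have hkd : ∀ x : ℝ, HasDerivAt (fun y => deriv φ y - 799/1600 * φ 0 * (y - 1/10)^2)
        (deriv (deriv φ) x - 799/800 * φ 0 * (x - 1/10)) x := by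
      intro x
      have hb : HasDerivAt (fun y : ℝ => 799/1600 * φ 0 * (y - 1/10)^2)
          (799/1600 * φ 0 * (2 * (x - 1/10))) x := by
        have h0 : HasDerivAt (fun y : ℝ => y - 1/10) 1 x := (hasDerivAt_id x).sub_const _
        have := (h0.pow 2).const_mul (799/1600 * φ 0)
        exact this.congr_deriv (by norm_num)
      have := (hd2 x).hasDerivAt.sub hb
      exact this.congr_deriv (by ring)
    have hkdiff : Differentiable ℝ (fun y => deriv φ y - 799/1600 * φ 0 * (y - 1/10)^2) :=
      fun x => (hkd x).differentiableAt
    have hkmono : MonotoneOn (fun y => deriv φ y - 799/1600 * φ 0 * (y - 1/10)^2)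
        (Set.Icc (1/10 : ℝ) (9/10)) := by
      apply monotoneOn_of_deriv_nonneg (convex_Icc _ _) hkdiff.continuous.continuousOn
        hkdiff.differentiableOn
      intro x hx
      rw [interior_Icc] at hx
      have hx1 : x ∈ Set.Icc (0:ℝ) 1 := ⟨by linarith [hx.1], by linarith [hx.2]⟩
      rw [(hkd x).deriv, hode x (h1L hx1)]
      have hlb := hχlb x hx1
      have hφl := hφlb x hx1
      have h1 : (x - 1/10) * (799/800 * φ 0) ≤ χ x * φ x := by
        apply mul_le_mul hlb hφl (by positivity) (by linarith [hlb, hx.1])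
      nlinarith [h1]
    have hk := hkmono ⟨le_refl _, by norm_num⟩ ⟨by norm_num, le_refl _⟩ (by norm_num)
    -- hk : φ'(1/10) - 0 ≤ φ'(9/10) - (799/1600) φ0 (8/10)²
    norm_num at hk
    have h910 : deriv φ (9/10) < 0 := hA (9/10) ⟨by norm_num, by linarith⟩
    have h110 : c ≤ deriv φ (1/10) :=
      hmono ⟨le_refl 0, h0L.le⟩ ⟨by norm_num, by linarith⟩ (by norm_num)
    -- c ≥ -(1/800) φ0, so φ'(9/10) ≥ -(1/800)φ0 + (799/1600)(16/25)φ0 > 0, contradiction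
    nlinarith [hk, h910, h110, hcon, hφ0]
  constructor
  · rw [lt_div_iff₀ hφ0]
    linarith [hlow]
  · rw [div_lt_iff₀ hφ0]
    linarith [hup]
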